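/- Let F : F_{2^m} → F_{2^m}. If there exists c ∈ F_{2^m}^* such that the algebraic degree of the Boolean function tr(cF(x)) is not in {0, 1, deg(F)}, then F is EA-inequivalent to every power function x ↦ x^d. -/

import Mathlib

/-- The 2-weight of a natural number: number of ones in its binary expansion. -/
def w2 (k : ℕ) : ℕ := (Nat.digits 2 k).sum

lemma w2_zero : w2 0 = 0 := by simp [w2]
lemma w2_one : w2 1 = 1 := by simp [w2]

lemma w2_def (n : ℕ) (hn : n ≠ 0) : w2 n = n % 2 + w2 (n / 2) := by
  obtain ⟨k, rfl⟩ := Nat.exists_eq_succ_of_ne_zero hn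
  rw [w2, Nat.digits_add_two_add_one, List.sum_cons]; rfl

lemma w2_two_mul (n : ℕ) : w2 (2 * n) = w2 n := by
  rcases Nat.eq_zero_or_pos n with rfl | hn
  · rfl
  · rw [w2_def (2 * n) (by omega), Nat.mul_mod_right, Nat.mul_div_cancel_left _ (by norm_num)]
    omega

lemma w2_two_mul_add_one (n : ℕ) : w2 (2 * n + 1) = w2 n + 1 := by
  rw [w2_def (2 * n + 1) (by omega), show (2 * n + 1) % 2 = 1 by omega,
    show (2 * n + 1) / 2 = n by omega]; omega

lemma w2_add_le (a b : ℕ) : w2 (a + b) ≤ w2 a + w2 b := by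
  have H : ∀ n a b : ℕ, a + b ≤ n → w2 (a + b) ≤ w2 a + w2 b := by
    intro n
    induction n using Nat.strong_induction_on with
    | _ n ih =>
    intro a b hab
    rcases Nat.eq_zero_or_pos a with rfl | ha
    · simp [w2_zero]
    rcases Nat.eq_zero_or_pos b with rfl | hb
    · simp [w2_zero]
    have hn : 0 < n := by omega
    rcases Nat.even_or_odd a with ⟨a', ha'⟩ | ⟨a', ha'⟩ <;>
      rcases Nat.even_or_odd b with ⟨b', hb'⟩ | ⟨b', hb'⟩
    · rw [show a + b = 2 * (a' + b') by omega, w2_two_mul, show a = 2 * a' by omega,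
        show b = 2 * b' by omega, w2_two_mul, w2_two_mul]
      exact ih (n - 1) (by omega) a' b' (by omega)
    · rw [show a + b = 2 * (a' + b') + 1 by omega, w2_two_mul_add_one,
        show a = 2 * a' by omega, show b = 2 * b' + 1 by omega, w2_two_mul, w2_two_mul_add_one]
      have := ih (n - 1) (by omega) a' b' (by omega); omega
    · rw [show a + b = 2 * (a' + b') + 1 by omega, w2_two_mul_add_one,
        show a = 2 * a' + 1 by omega, show b = 2 * b' by omega, w2_two_mul_add_one, w2_two_mul]
      have := ih (n - 1) (by omega) a' b' (by omega); omega
    · rw [show a + b = 2 * (a' + b' + 1) by omega, w2_two_mul,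
        show a = 2 * a' + 1 by omega, show b = 2 * b' + 1 by omega, w2_two_mul_add_one,
        w2_two_mul_add_one]
      have h1 := ih (n - 1) (by omega) a' (b' + 1) (by omega)
      have h2 := ih (n - 1) (by omega) b' 1 (by omega)
      rw [w2_one] at h2
      rw [add_assoc]
      omega
  exact H (a + b) a b le_rfl

lemma w2_pow_mul (i n : ℕ) : w2 (2 ^ i * n) = w2 n := by
  induction i with
  | zero => simp
  | succ i ih => rw [pow_succ, mul_comm (2^i) 2, mul_assoc, w2_two_mul, ih]

/-- exact additivity when the summands occupy disjoint digit ranges -/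
lemma w2_mul_pow_add (v i u : ℕ) (hu : u < 2 ^ i) : w2 (v * 2 ^ i + u) = w2 v + w2 u := by
  induction i generalizing u with
  | zero => interval_cases u; simp [w2_zero]
  | succ i ih =>
    rcases Nat.even_or_odd u with ⟨u', hu'⟩ | ⟨u', hu'⟩
    · rw [show v * 2 ^ (i+1) + u = 2 * (v * 2 ^ i + u') by ring_nf; omega, w2_two_mul,
        ih u' (by omega), show u = 2 * u' by omega, w2_two_mul]
    · rw [show v * 2 ^ (i+1) + u = 2 * (v * 2 ^ i + u') + 1 by ring_nf; omega,
        w2_two_mul_add_one, ih u' (by omega), show u = 2 * u' + 1 by omega, w2_two_mul_add_one]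
      omega

/-! ### reduction of exponents mod `2^m - 1` into `[1, 2^m-1]` -/

def rho (m n : ℕ) : ℕ := if n = 0 then 0 else (n - 1) % (2 ^ m - 1) + 1

section rho
variable {m : ℕ} (hm : 0 < m)

lemma rho_zero : rho m 0 = 0 := rfl

include hm

lemma one_lt_q : 2 ≤ 2 ^ m := by
  calc 2 = 2 ^ 1 := (pow_one 2).symm
  _ ≤ 2 ^ m := Nat.pow_le_pow_right (by norm_num) hm

lemma rho_le (n : ℕ) : rho m n ≤ 2 ^ m - 1 := by
  have h1 : 1 ≤ 2 ^ m - 1 := by have := one_lt_q hm; omega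
  rcases Nat.eq_zero_or_pos n with rfl | hn
  · rw [rho_zero]; omega
  · rw [rho, if_neg (by omega)]
    have := Nat.mod_lt (n - 1) (show 0 < 2 ^ m - 1 by omega)
    omega

omit hm in
lemma rho_pos (n : ℕ) (hn : 0 < n) : 0 < rho m n := by
  rw [rho, if_neg (by omega)]; omega

lemma rho_eq_of_modeq {n r : ℕ} (hn : 0 < n) (hr : 0 < r) (hrq : r ≤ 2 ^ m - 1)
    (h : n % (2 ^ m - 1) = r % (2 ^ m - 1)) : rho m n = r := by
  rw [rho, if_neg (by omega)]
  set k := 2 ^ m - 1 with hk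
  have hkpos : 0 < k := by have := one_lt_q hm; omega
  suffices hs : (n - 1) % k = r - 1 by omega
  rcases Nat.lt_or_ge r k with hrk | hrk
  · rw [Nat.mod_eq_of_lt hrk] at h
    have hd : k * (n / k) + r = n := by conv_rhs => rw [← Nat.div_add_mod n k, h]
    have : n - 1 = k * (n / k) + (r - 1) := by omega
    rw [this, Nat.mul_add_mod, Nat.mod_eq_of_lt (by omega)]
  · have hrk' : r = k := le_antisymm hrq hrk
    subst hrk'
    rw [Nat.mod_self] at h
    have hd : k * (n / k) = n := by
      conv_rhs => rw [← Nat.div_add_mod n k, h, add_zero]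
    obtain ⟨s, hs⟩ : ∃ s, n / k = s + 1 := by
      rcases Nat.eq_zero_or_pos (n / k) with h0 | h1
      · rw [h0, mul_zero] at hd; omega
      · exact ⟨n / k - 1, by omega⟩
    have : n - 1 = k * s + (k - 1) := by
      rw [← hd, hs, Nat.mul_add, mul_one]; omega
    rw [this, Nat.mul_add_mod, Nat.mod_eq_of_lt (by omega)]

lemma rho_modeq (n : ℕ) (hn : 0 < n) : rho m n % (2 ^ m - 1) = n % (2 ^ m - 1) := by
  set k := 2 ^ m - 1 with hk
  have hkpos : 0 < k := by have := one_lt_q hm; omega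
  rw [rho, if_neg (by omega)]
  have hd : n = k * ((n - 1) / k) + ((n - 1) % k + 1) := by
    have := Nat.div_add_mod (n - 1) k
    omega
  conv_rhs => rw [hd]
  rw [Nat.mul_add_mod]

lemma w2_rho_le (n : ℕ) : w2 (rho m n) ≤ w2 n := by
  induction n using Nat.strong_induction_on with
  | _ n ih =>
  rcases Nat.lt_or_ge n (2 ^ m) with h | h
  · rcases Nat.eq_zero_or_pos n with rfl | hn
    · rw [rho_zero]
    · rw [rho_eq_of_modeq hm hn hn (by omega) rfl]
  · set n' := n / 2 ^ m + n % 2 ^ m with hn'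
    have hq2 : 2 ≤ 2 ^ m := one_lt_q hm
    have hdiv : 0 < n / 2 ^ m := Nat.div_pos h (by omega)
    have hdm : 2 ^ m * (n / 2 ^ m) + n % 2 ^ m = n := Nat.div_add_mod n (2 ^ m)
    have hlt : n' < n := by
      have h6 : 2 * (n / 2 ^ m) ≤ 2 ^ m * (n / 2 ^ m) := Nat.mul_le_mul_right _ hq2
      omega
    have hmodeq : n % (2 ^ m - 1) = n' % (2 ^ m - 1) := by
      conv_lhs => rw [← hdm]
      have h5 : 2 ^ m * (n / 2 ^ m) = (2 ^ m - 1) * (n / 2 ^ m) + n / 2 ^ m := by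
        cases' Nat.exists_eq_add_of_le (show 1 ≤ 2 ^ m by omega) with t ht
        rw [ht, Nat.add_sub_cancel_left, Nat.add_mul, one_mul, Nat.add_comm (t * (n / (1+t)))]
      rw [h5, add_assoc, Nat.mul_add_mod]
    have hrho : rho m n = rho m n' := by
      have hn'pos : 0 < n' := by omega
      exact rho_eq_of_modeq hm (show 0 < n by omega) (rho_pos n' hn'pos) (rho_le hm n')
        (by rw [hmodeq, rho_modeq hm n' hn'pos])
    rw [hrho]
    calc w2 (rho m n') ≤ w2 n' := ih n' hlt
    _ ≤ w2 (n / 2 ^ m) + w2 (n % 2 ^ m) := w2_add_le _ _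
    _ = w2 n := by
        conv_rhs => rw [← hdm]
        rw [mul_comm, w2_mul_pow_add _ _ _ (Nat.mod_lt _ (by omega))]

/-- cyclic rotation: exact weight of `rho (e * 2^i)` -/
lemma w2_rho_mul_pow (e i : ℕ) (he : 0 < e) (heq : e ≤ 2 ^ m - 1) (him : i < m) :
    w2 (rho m (e * 2 ^ i)) = w2 e := by
  set u := e / 2 ^ (m - i) with hu
  set v := e % 2 ^ (m - i) with hv
  have hdm : 2 ^ (m - i) * u + v = e := Nat.div_add_mod e (2 ^ (m - i))
  have hvlt : v < 2 ^ (m - i) := Nat.mod_lt _ (by positivity)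
  have hipow : 2 ^ (m - i) * 2 ^ i = 2 ^ m := by
    rw [← pow_add]; congr 1; omega
  have hult : u < 2 ^ i := by
    by_contra hcon
    push_neg at hcon
    have : 2 ^ m ≤ 2 ^ (m - i) * u := by
      calc 2 ^ m = 2 ^ (m - i) * 2 ^ i := hipow.symm
      _ ≤ 2 ^ (m - i) * u := Nat.mul_le_mul_left _ hcon
    have h2 : 2 ^ m ≤ e := le_trans this (by omega)
    have := one_lt_q hm
    omega
  set r := u + v * 2 ^ i with hr
  have hrpos : 0 < r := by
    rcases Nat.eq_zero_or_pos u with h0 | h1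
    · rcases Nat.eq_zero_or_pos v with h2 | h3
      · rw [h0, h2, Nat.mul_zero, Nat.add_zero] at hdm; omega
      · have : 0 < v * 2 ^ i := by positivity
        omega
    · omega
  have hrle : r ≤ 2 ^ m - 1 := by
    have h1 : u ≤ 2 ^ i - 1 := by omega
    have h2 : v * 2 ^ i ≤ (2 ^ (m - i) - 1) * 2 ^ i := Nat.mul_le_mul_right _ (by omega)
    have h3 : (2 ^ (m - i) - 1) * 2 ^ i = 2 ^ m - 2 ^ i := by
      cases' Nat.exists_eq_add_of_le Nat.one_le_two_pow with t ht
      have h7 := hipow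
      rw [ht, Nat.add_mul, one_mul] at h7
      rw [ht, Nat.add_sub_cancel_left]
      omega
    have h4 : 0 < 2 ^ i := by positivity
    have h5 : 2 ^ i ≤ 2 ^ m := Nat.pow_le_pow_right (by norm_num) (by omega)
    omega
  have hmodeq : (e * 2 ^ i) % (2 ^ m - 1) = r % (2 ^ m - 1) := by
    have hexp : e * 2 ^ i = u * 2 ^ m + v * 2 ^ i := by
      rw [← hipow]
      calc e * 2 ^ i = (2 ^ (m - i) * u + v) * 2 ^ i := by rw [hdm]
      _ = u * (2 ^ (m - i) * 2 ^ i) + v * 2 ^ i := by ring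
    rw [hexp]
    have : u * 2 ^ m = u * (2 ^ m - 1) + u := by
      cases' Nat.exists_eq_add_of_le Nat.one_le_two_pow with t ht
      rw [ht, Nat.add_sub_cancel_left, Nat.mul_add, Nat.mul_one, Nat.add_comm (u * t)]
    rw [this,
      show u * (2 ^ m - 1) + u + v * 2 ^ i
        = (u + v * 2 ^ i) + (2 ^ m - 1) * u by ring, Nat.add_mul_mod_self_left]
  have := rho_eq_of_modeq hm (show 0 < e * 2 ^ i by positivity) hrpos hrle hmodeq
  rw [this, hr, add_comm u, w2_mul_pow_add v i u hult]
  conv_rhs => rw [← hdm, mul_comm, w2_mul_pow_add u (m - i) v hvlt]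
  omega

end rho

/-! ### polynomial weight degree over the Galois field -/

open Polynomial

noncomputable section Kfield

variable {m : ℕ} (hm : 0 < m)

local notation "K" => GaloisField 2 m

lemma card_K (hm : 0 < m) [Fintype K] : Fintype.card K = 2 ^ m := by
  have := GaloisField.card 2 m (by omega)
  rwa [Nat.card_eq_fintype_card] at this

include hm in
lemma pow_rho (x : K) (n : ℕ) : x ^ rho m n = x ^ n := by
  rcases Nat.eq_zero_or_pos n with rfl | hn
  · rw [rho_zero]
  haveI : Fintype K := Fintype.ofFinite K
  rcases eq_or_ne x 0 with rfl | hx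
  · rw [zero_pow (by have := rho_pos (m := m) n hn; omega), zero_pow (by omega)]
  · have hcard : x ^ (2 ^ m - 1) = 1 := by
      have := FiniteField.pow_card_sub_one_eq_one x hx
      rwa [card_K hm] at this
    have key : ∀ a : ℕ, x ^ a = x ^ (a % (2 ^ m - 1)) := by
      intro a
      conv_lhs => rw [← Nat.div_add_mod a (2 ^ m - 1)]
      rw [pow_add, pow_mul, hcard, one_pow, one_mul]
    rw [key (rho m n), key n, rho_modeq hm n hn]

/-- the weighted degree of a polynomial -/
def wdeg (p : K[X]) : ℕ := p.support.sup w2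

lemma wdeg_le {p : K[X]} {D : ℕ} (h : ∀ n ∈ p.support, w2 n ≤ D) : wdeg p ≤ D :=
  Finset.sup_le h

lemma le_wdeg {p : K[X]} {n : ℕ} (h : n ∈ p.support) : w2 n ≤ wdeg p :=
  Finset.le_sup h

lemma wdeg_C (a : K) : wdeg (C a) = 0 := by
  apply Nat.le_antisymm _ (Nat.zero_le _)
  apply wdeg_le
  intro n hn
  have := Polynomial.mem_support_iff.mp hn
  rcases eq_or_ne n 0 with rfl | h0
  · simp [w2_zero]
  · exact absurd (Polynomial.coeff_C_ne_zero h0) (by simpa using this)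

lemma wdeg_add_le (p q : K[X]) : wdeg (p + q) ≤ max (wdeg p) (wdeg q) := by
  apply wdeg_le
  intro n hn
  rcases Finset.mem_union.mp (Polynomial.support_add hn) with h | h
  · exact le_trans (le_wdeg h) (le_max_left _ _)
  · exact le_trans (le_wdeg h) (le_max_right _ _)

lemma wdeg_mul_le (p q : K[X]) : wdeg (p * q) ≤ wdeg p + wdeg q := by
  apply wdeg_le
  intro n hn
  have hc : (p * q).coeff n ≠ 0 := Polynomial.mem_support_iff.mp hn
  rw [Polynomial.coeff_mul] at hc
  obtain ⟨⟨a, b⟩, hab, hne⟩ := Finset.exists_ne_zero_of_sum_ne_zero hc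
  have hab' : a + b = n := Finset.HasAntidiagonal.mem_antidiagonal.mp hab
  have ha : p.coeff a ≠ 0 := fun h => hne (by simp [h])
  have hb : q.coeff b ≠ 0 := fun h => hne (by simp [h])
  calc w2 n = w2 (a + b) := by rw [hab']
  _ ≤ w2 a + w2 b := w2_add_le a b
  _ ≤ wdeg p + wdeg q :=
      Nat.add_le_add (le_wdeg (Polynomial.mem_support_iff.mpr ha))
        (le_wdeg (Polynomial.mem_support_iff.mpr hb))

lemma wdeg_sum_le {ι : Type*} [DecidableEq ι] (s : Finset ι) (f : ι → K[X]) {D : ℕ}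
    (h : ∀ i ∈ s, wdeg (f i) ≤ D) : wdeg (∑ i ∈ s, f i) ≤ D := by
  induction s using Finset.induction_on with
  | empty => simp [wdeg]
  | @insert a s ha ih =>
    rw [Finset.sum_insert ha]
    refine le_trans (wdeg_add_le _ _) (max_le (h a (Finset.mem_insert_self a s)) ?_)
    exact ih fun i hi => h i (Finset.mem_insert_of_mem hi)

lemma wdeg_sq_le (p : K[X]) : wdeg (p ^ 2) ≤ wdeg p := by
  apply wdeg_le
  intro n hn
  have hmap : Polynomial.map (frobenius K 2) (Polynomial.expand K 2 p) = p ^ 2 :=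
    Polynomial.map_frobenius_expand (p := 2) p
  rw [← hmap] at hn
  have h1 := Polynomial.support_map_subset _ _ hn
  have h2 := Polynomial.mem_support_iff.mp h1
  rw [Polynomial.coeff_expand (by norm_num)] at h2
  by_cases hd : 2 ∣ n
  · rw [if_pos hd] at h2
    have : w2 n = w2 (n / 2) := by
      conv_lhs => rw [show n = 2 * (n / 2) by omega]
      exact w2_two_mul _
    rw [this]
    exact le_wdeg (Polynomial.mem_support_iff.mpr h2)
  · rw [if_neg hd] at h2
    exact absurd rfl h2

lemma wdeg_pow_le (p : K[X]) (e : ℕ) : wdeg (p ^ e) ≤ w2 e * wdeg p := by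
  induction e using Nat.strong_induction_on with
  | _ e ih =>
  rcases Nat.eq_zero_or_pos e with rfl | he
  · rw [pow_zero, w2_zero, zero_mul]
    apply wdeg_le
    intro n hn
    have h1 : (1 : K[X]).coeff n ≠ 0 := Polynomial.mem_support_iff.mp hn
    rw [Polynomial.coeff_one] at h1
    have : n = 0 := by by_contra h0; simp [h0] at h1
    simp [this, w2_zero]
  rcases Nat.even_or_odd e with ⟨e', he'⟩ | ⟨e', he'⟩
  · have h1 : p ^ e = (p ^ e') ^ 2 := by rw [← pow_mul, he']; ring_nf
    have h2 : w2 e = w2 e' := by rw [he', show e' + e' = 2 * e' by ring, w2_two_mul]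
    rw [h1, h2]
    exact le_trans (wdeg_sq_le _) (ih e' (by omega))
  · have h1 : p ^ e = (p ^ e') ^ 2 * p := by
      rw [← pow_mul, ← pow_succ, he']
      congr 1
      ring
    have h2 : w2 e = w2 e' + 1 := by rw [he', w2_two_mul_add_one]
    rw [h1, h2]
    calc wdeg ((p ^ e') ^ 2 * p) ≤ wdeg ((p ^ e') ^ 2) + wdeg p := wdeg_mul_le _ _
    _ ≤ wdeg (p ^ e') + wdeg p := by have := wdeg_sq_le (p ^ e'); omega
    _ ≤ w2 e' * wdeg p + wdeg p := by have := ih e' (by omega); omega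
    _ = (w2 e' + 1) * wdeg p := by ring

end Kfield

/-- The algebraic degree of a function on `𝔽_{2^m}`: the max 2-weight of the
exponents with nonzero coefficient in its (unique) univariate polynomial
representation of degree `< 2^m`. -/
noncomputable def algDeg (m : ℕ) (F : GaloisField 2 m → GaloisField 2 m) : ℕ :=
  sInf {d : ℕ | ∃ p : Polynomial (GaloisField 2 m),
    (∀ x, p.eval x = F x) ∧ p.natDegree < 2 ^ m ∧ d = p.support.sup w2}

noncomputable section Kfield2

open Polynomial

variable {m : ℕ} (hm : 0 < m)

local notation "K" => GaloisField 2 m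

/-- reduction of a polynomial modulo the functional equation `x^(2^m) = x` -/
def reduce (p : K[X]) : K[X] := ∑ e ∈ p.support, C (p.coeff e) * X ^ rho m e

include hm

lemma eval_reduce (p : K[X]) (x : K) : (reduce (m := m) p).eval x = p.eval x := by
  rw [reduce, Polynomial.eval_finset_sum]
  conv_rhs => rw [Polynomial.eval_eq_sum, Polynomial.sum_def]
  apply Finset.sum_congr rfl
  intro e _
  rw [Polynomial.eval_mul, Polynomial.eval_C, Polynomial.eval_pow, Polynomial.eval_X,
    pow_rho hm x e]

lemma natDegree_reduce_lt (p : K[X]) : (reduce (m := m) p).natDegree < 2 ^ m := by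
  have h2 : 2 ≤ 2 ^ m := one_lt_q hm
  apply Nat.lt_of_le_of_lt (Polynomial.natDegree_sum_le_of_forall_le _ _ ?_) (show 2 ^ m - 1 < 2 ^ m by omega)
  intro e _
  refine le_trans (Polynomial.natDegree_C_mul_le _ _) ?_
  refine le_trans (Polynomial.natDegree_X_pow_le _) (rho_le hm e)

lemma wdeg_reduce_le (p : K[X]) : wdeg (reduce (m := m) p) ≤ wdeg p := by
  apply wdeg_sum_le
  intro e he
  apply wdeg_le
  intro n hn
  have h1 : (C (p.coeff e) * X ^ rho m e).coeff n ≠ 0 := Polynomial.mem_support_iff.mp hn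
  rw [Polynomial.coeff_C_mul, Polynomial.coeff_X_pow] at h1
  have hne : n = rho m e := by by_contra h0; simp [h0] at h1
  subst hne
  exact le_trans (w2_rho_le hm e) (le_wdeg he)

/-- any polynomial representing `F` (no degree assumption) bounds `algDeg` -/
lemma algDeg_le_wdeg {F : K → K} {p : K[X]} (hp : ∀ x, p.eval x = F x) :
    algDeg m F ≤ wdeg p := by
  refine le_trans (Nat.sInf_le ?_) (wdeg_reduce_le hm p)
  exact ⟨reduce (m := m) p, fun x => by rw [eval_reduce hm p x, hp x],
    natDegree_reduce_lt hm p, rfl⟩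

/-- uniqueness of low-degree representations -/
lemma rep_unique {p q : K[X]} (hpq : ∀ x, p.eval x = q.eval x)
    (hp : p.natDegree < 2 ^ m) (hq : q.natDegree < 2 ^ m) : p = q := by
  haveI : Fintype K := Fintype.ofFinite K
  have h0 : p - q = 0 := by
    apply Polynomial.eq_zero_of_natDegree_lt_card_of_eval_eq_zero' (p - q) Finset.univ
    · intro x _
      rw [Polynomial.eval_sub, hpq x, sub_self]
    · rw [Finset.card_univ, card_K hm]
      exact Nat.lt_of_le_of_lt (Polynomial.natDegree_sub_le p q) (by omega)
  have := sub_eq_zero.mp h0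
  exact this

/-- `algDeg` equals the weighted degree of any low-degree representation -/
lemma algDeg_eq_wdeg {F : K → K} {p : K[X]} (hp : ∀ x, p.eval x = F x)
    (hd : p.natDegree < 2 ^ m) : algDeg m F = wdeg p := by
  have hmem : wdeg p ∈ {d : ℕ | ∃ p : K[X],
      (∀ x, p.eval x = F x) ∧ p.natDegree < 2 ^ m ∧ d = p.support.sup w2} := ⟨p, hp, hd, rfl⟩
  have hne : {d : ℕ | ∃ p : K[X],
      (∀ x, p.eval x = F x) ∧ p.natDegree < 2 ^ m ∧ d = p.support.sup w2}.Nonempty := ⟨_, hmem⟩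
  obtain ⟨q, hq1, hq2, hq3⟩ := Nat.sInf_mem hne
  have : q = p := rep_unique hm (fun x => by rw [hq1 x, hp x]) hq2 hd
  rw [algDeg, hq3, this]
  rfl

/-- existence of a low-degree representation for any function -/
lemma exists_rep (F : K → K) : ∃ p : K[X], (∀ x, p.eval x = F x) ∧ p.natDegree < 2 ^ m ∧
    wdeg p = algDeg m F := by
  haveI : Fintype K := Fintype.ofFinite K
  classical
  set p := Lagrange.interpolate Finset.univ id F with hp
  have heval : ∀ x, p.eval x = F x := by
    intro x
    exact Lagrange.eval_interpolate_at_node _ (Function.injective_id.injOn) (Finset.mem_univ x)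
  have hdeg : p.natDegree < 2 ^ m := by
    have hlt := Lagrange.degree_interpolate_lt (v := (id : K → K)) (s := Finset.univ)
      (r := F) Function.injective_id.injOn
    rw [Finset.card_univ, card_K hm] at hlt
    rcases eq_or_ne p 0 with h0 | h0
    · rw [h0, Polynomial.natDegree_zero]
      have := one_lt_q hm; omega
    · exact (Polynomial.natDegree_lt_iff_degree_lt h0).mpr (by exact_mod_cast hlt)
  exact ⟨p, heval, hdeg, (algDeg_eq_wdeg hm heval hdeg).symm⟩

end Kfield2

noncomputable section Linearized

open Polynomial

variable {m : ℕ}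

local notation "K" => GaloisField 2 m

/-- the linearized polynomial map associated to a coefficient vector -/
def psi (a : Fin m → K) : K →ₗ[ZMod 2] K :=
  AddMonoidHom.toZModLinearMap 2 (AddMonoidHom.mk' (fun x => ∑ i, a i * x ^ 2 ^ (i : ℕ)) (by
    intro x y
    rw [← Finset.sum_add_distrib]
    refine Finset.sum_congr rfl fun i _ => ?_
    rw [add_pow_char_pow, mul_add]))

lemma psi_apply (a : Fin m → K) (x : K) : psi a x = ∑ i, a i * x ^ 2 ^ (i : ℕ) := rfl

lemma psi_injective (hm : 0 < m) : Function.Injective (psi (m := m)) := by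
  intro a b hab
  haveI : Fintype K := Fintype.ofFinite K
  funext i
  set P : K[X] := ∑ j, C (a j - b j) * X ^ 2 ^ (j : ℕ) with hP
  have heval : ∀ x, P.eval x = 0 := by
    intro x
    rw [hP, Polynomial.eval_finset_sum]
    have h1 : psi a x = psi b x := by rw [hab]
    rw [psi_apply, psi_apply] at h1
    calc ∑ j, (C (a j - b j) * X ^ 2 ^ (j : ℕ)).eval x
        = ∑ j, (a j - b j) * x ^ 2 ^ (j : ℕ) := by
          refine Finset.sum_congr rfl fun j _ => ?_
          rw [Polynomial.eval_mul, Polynomial.eval_C, Polynomial.eval_pow, Polynomial.eval_X]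
    _ = (∑ j, a j * x ^ 2 ^ (j : ℕ)) - (∑ j, b j * x ^ 2 ^ (j : ℕ)) := by
          rw [← Finset.sum_sub_distrib]
          refine Finset.sum_congr rfl fun j _ => by ring
    _ = 0 := by rw [h1, sub_self]
  have hdeg : P.natDegree < 2 ^ m := by
    apply Nat.lt_of_le_of_lt (Polynomial.natDegree_sum_le_of_forall_le _ _ ?_)
      (show 2 ^ (m - 1) < 2 ^ m from Nat.pow_lt_pow_right (by norm_num) (by omega))
    intro j _
    refine le_trans (Polynomial.natDegree_C_mul_le _ _) ?_
    refine le_trans (Polynomial.natDegree_X_pow_le _) ?_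
    exact Nat.pow_le_pow_right (by norm_num) (by omega)
  have hP0 : P = 0 := by
    apply Polynomial.eq_zero_of_natDegree_lt_card_of_eval_eq_zero' P Finset.univ
      (fun x _ => heval x)
    rw [Finset.card_univ, card_K hm]
    exact hdeg
  have hcoeff : P.coeff (2 ^ (i : ℕ)) = a i - b i := by
    rw [hP, Polynomial.finset_sum_coeff]
    rw [Finset.sum_eq_single i]
    · rw [Polynomial.coeff_C_mul, Polynomial.coeff_X_pow, if_pos rfl, mul_one]
    · intro j _ hji
      rw [Polynomial.coeff_C_mul, Polynomial.coeff_X_pow, if_neg, mul_zero]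
      intro h
      exact hji (Fin.ext (Nat.pow_right_injective le_rfl h.symm ▸ rfl))
    · intro h; exact absurd (Finset.mem_univ i) h
  rw [hP0] at hcoeff
  simp only [Polynomial.coeff_zero] at hcoeff
  exact sub_eq_zero.mp hcoeff.symm |>.symm ▸ rfl

lemma exists_linearized (hm : 0 < m) (f : K → K) (hf : ∀ x y, f (x + y) = f x + f y) :
    ∃ a : Fin m → K, ∀ x, f x = ∑ i, a i * x ^ 2 ^ (i : ℕ) := by
  haveI : Fintype K := Fintype.ofFinite K
  haveI : FiniteDimensional (ZMod 2) K := inferInstance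
  -- the linear map version of f
  set L : K →ₗ[ZMod 2] K := AddMonoidHom.toZModLinearMap 2 (AddMonoidHom.mk' f hf) with hL
  -- an equivalence between coefficient vectors and linear maps
  have hrank : Module.finrank (ZMod 2) K = m := GaloisField.finrank 2 (by omega)
  let b : Module.Basis (Fin m) (ZMod 2) K := (Module.finBasis (ZMod 2) K).reindex (finCongr hrank)
  let e : (Fin m → K) ≃ (K →ₗ[ZMod 2] K) := (b.constr (ZMod 2)).toEquiv
  have hsurj : Function.Surjective (psi (m := m)) :=
    (psi_injective hm).surjective_of_finite e
  obtain ⟨a, ha⟩ := hsurj L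
  exact ⟨a, fun x => by rw [← psi_apply, ha]; rfl⟩

end Linearized

noncomputable section MainLemmas

open Polynomial

variable {m : ℕ}

local notation "K" => GaloisField 2 m

lemma w2_two_pow (i : ℕ) : w2 (2 ^ i) = 1 := by
  induction i with
  | zero => exact w2_one
  | succ i ih => rw [pow_succ, mul_comm, w2_two_mul, ih]

lemma wdeg_C_mul_X_pow_le (c : K) (n : ℕ) : wdeg (C c * X ^ n) ≤ w2 n := by
  apply wdeg_le
  intro k hk
  have h1 : (C c * X ^ n).coeff k ≠ 0 := Polynomial.mem_support_iff.mp hk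
  rw [Polynomial.coeff_C_mul, Polynomial.coeff_X_pow] at h1
  have : k = n := by by_contra h0; simp [h0] at h1
  rw [this]

lemma algDeg_congr {F G : K → K} (h : ∀ x, F x = G x) : algDeg m F = algDeg m G := by
  unfold algDeg
  congr 1
  ext d
  constructor
  · rintro ⟨p, h1, h2, h3⟩; exact ⟨p, fun x => (h1 x).trans (h x), h2, h3⟩
  · rintro ⟨p, h1, h2, h3⟩; exact ⟨p, fun x => (h1 x).trans (h x).symm, h2, h3⟩

/-- Master lemma: composing with additive maps and constants does not raise
the algebraic degree above `max (algDeg H) 1`. -/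
lemma algDeg_comp_le (hm : 0 < m) (H Λ₁ Λ₂ Λ₃ : K → K)
    (h₁ : ∀ x y, Λ₁ (x + y) = Λ₁ x + Λ₁ y)
    (h₂ : ∀ x y, Λ₂ (x + y) = Λ₂ x + Λ₂ y)
    (h₃ : ∀ x y, Λ₃ (x + y) = Λ₃ x + Λ₃ y) (k₂ k₃ : K) :
    algDeg m (fun x => Λ₁ (H (Λ₂ x + k₂)) + Λ₃ x + k₃) ≤ max (algDeg m H) 1 := by
  obtain ⟨p, hp, hpd, hpw⟩ := exists_rep hm H
  obtain ⟨a, ha⟩ := exists_linearized hm Λ₁ h₁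
  obtain ⟨bb, hbb⟩ := exists_linearized hm Λ₂ h₂
  obtain ⟨t, ht⟩ := exists_linearized hm Λ₃ h₃
  set p₂ : K[X] := (∑ j, C (bb j) * X ^ 2 ^ (j : ℕ)) + C k₂ with hp₂
  have heval₂ : ∀ x, p₂.eval x = Λ₂ x + k₂ := by
    intro x
    rw [hp₂, Polynomial.eval_add, Polynomial.eval_C, Polynomial.eval_finset_sum, hbb x]
    congr 1
    refine Finset.sum_congr rfl fun j _ => ?_
    rw [Polynomial.eval_mul, Polynomial.eval_C, Polynomial.eval_pow, Polynomial.eval_X]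
  have hw₂ : wdeg p₂ ≤ 1 := by
    refine le_trans (wdeg_add_le _ _) (max_le ?_ (by rw [wdeg_C]; omega))
    refine wdeg_sum_le _ _ fun j _ => ?_
    refine le_trans (wdeg_C_mul_X_pow_le _ _) ?_
    rw [w2_two_pow]
  set Q : K[X] := p.comp p₂ with hQ
  have hevalQ : ∀ x, Q.eval x = H (Λ₂ x + k₂) := by
    intro x
    rw [hQ, Polynomial.eval_comp, heval₂ x, hp]
  have hwQ : wdeg Q ≤ wdeg p := by
    rw [hQ, Polynomial.comp_eq_sum_left, Polynomial.sum_def]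
    refine wdeg_sum_le _ _ fun e he => ?_
    calc wdeg (C (p.coeff e) * p₂ ^ e) ≤ wdeg (C (p.coeff e)) + wdeg (p₂ ^ e) := wdeg_mul_le _ _
    _ ≤ 0 + w2 e * wdeg p₂ := by
        have := wdeg_pow_le p₂ e
        rw [wdeg_C]
        omega
    _ ≤ w2 e * 1 := by
        have := Nat.mul_le_mul_left (w2 e) hw₂
        omega
    _ ≤ wdeg p := by rw [mul_one]; exact le_wdeg he
  set P : K[X] := (∑ i, C (a i) * Q ^ 2 ^ (i : ℕ)) + ((∑ j, C (t j) * X ^ 2 ^ (j : ℕ)) + C k₃)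
    with hP
  have hevalP : ∀ x, P.eval x = Λ₁ (H (Λ₂ x + k₂)) + Λ₃ x + k₃ := by
    intro x
    rw [hP, Polynomial.eval_add, Polynomial.eval_add, Polynomial.eval_C,
      Polynomial.eval_finset_sum, Polynomial.eval_finset_sum]
    have e1 : ∑ i, (C (a i) * Q ^ 2 ^ (i : ℕ)).eval x = Λ₁ (H (Λ₂ x + k₂)) := by
      rw [ha]
      refine Finset.sum_congr rfl fun i _ => ?_
      rw [Polynomial.eval_mul, Polynomial.eval_C, Polynomial.eval_pow, hevalQ x]
    have e2 : ∑ j, (C (t j) * X ^ 2 ^ (j : ℕ)).eval x = Λ₃ x := by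
      rw [ht]
      refine Finset.sum_congr rfl fun j _ => ?_
      rw [Polynomial.eval_mul, Polynomial.eval_C, Polynomial.eval_pow, Polynomial.eval_X]
    rw [e1, e2, add_assoc]
  have hwP : wdeg P ≤ max (wdeg p) 1 := by
    refine le_trans (wdeg_add_le _ _) (max_le ?_ ?_)
    · refine le_trans (wdeg_sum_le _ _ (fun i _ => ?_)) (le_max_left _ _)
      calc wdeg (C (a i) * Q ^ 2 ^ (i : ℕ))
          ≤ wdeg (C (a i)) + wdeg (Q ^ 2 ^ (i : ℕ)) := wdeg_mul_le _ _
      _ ≤ 0 + w2 (2 ^ (i : ℕ)) * wdeg Q := by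
          have := wdeg_pow_le Q (2 ^ (i : ℕ)); rw [wdeg_C]; omega
      _ ≤ wdeg p := by rw [w2_two_pow, one_mul]; omega
    · refine le_trans (wdeg_add_le _ _) (max_le ?_ (by rw [wdeg_C]; omega))
      refine le_trans (wdeg_sum_le _ _ fun j _ => le_trans (wdeg_C_mul_X_pow_le _ _)
        (by rw [w2_two_pow])) (le_max_right _ _)
  calc algDeg m (fun x => Λ₁ (H (Λ₂ x + k₂)) + Λ₃ x + k₃) ≤ wdeg P :=
        algDeg_le_wdeg hm hevalP
  _ ≤ max (wdeg p) 1 := hwP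
  _ = max (algDeg m H) 1 := by rw [hpw]

lemma algDeg_affine_le (hm : 0 < m) (τ : K → K)
    (hτ : ∀ x y, τ (x + y) = τ x + τ y) (k : K) :
    algDeg m (fun x => τ x + k) ≤ 1 := by
  obtain ⟨t, ht⟩ := exists_linearized hm τ hτ
  set P : K[X] := (∑ j, C (t j) * X ^ 2 ^ (j : ℕ)) + C k with hP
  have hevalP : ∀ x, P.eval x = τ x + k := by
    intro x
    rw [hP, Polynomial.eval_add, Polynomial.eval_C, Polynomial.eval_finset_sum, ht x]
    congr 1
    refine Finset.sum_congr rfl fun j _ => ?_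
    rw [Polynomial.eval_mul, Polynomial.eval_C, Polynomial.eval_pow, Polynomial.eval_X]
  refine le_trans (algDeg_le_wdeg hm hevalP) ?_
  refine le_trans (wdeg_add_le _ _) (max_le ?_ (by rw [wdeg_C]; omega))
  exact wdeg_sum_le _ _ fun j _ => le_trans (wdeg_C_mul_X_pow_le _ _) (by rw [w2_two_pow])

lemma algDeg_pow (hm : 0 < m) (e : ℕ) (he : e < 2 ^ m) :
    algDeg m (fun y : K => y ^ e) = w2 e := by
  have heval : ∀ x : K, (X ^ e : K[X]).eval x = x ^ e := by
    intro x; rw [Polynomial.eval_pow, Polynomial.eval_X]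
  have hdeg : (X ^ e : K[X]).natDegree < 2 ^ m := by
    rw [Polynomial.natDegree_X_pow]; exact he
  rw [algDeg_eq_wdeg hm heval hdeg, wdeg,
    Polynomial.support_X_pow, Finset.sup_singleton]

lemma algDeg_tau_pow (hm : 0 < m) (τ : K → K)
    (hτ : ∀ x y, τ (x + y) = τ x + τ y) (e : ℕ) (he : 0 < e) (heq : e ≤ 2 ^ m - 1) :
    algDeg m (fun y => τ (y ^ e)) = 0 ∨ algDeg m (fun y => τ (y ^ e)) = w2 e := by
  obtain ⟨a, ha⟩ := exists_linearized hm τ hτ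
  set P : K[X] := ∑ i, C (a i) * X ^ rho m (e * 2 ^ (i : ℕ)) with hP
  have heval : ∀ y, P.eval y = τ (y ^ e) := by
    intro y
    rw [hP, Polynomial.eval_finset_sum, ha]
    refine Finset.sum_congr rfl fun i _ => ?_
    rw [Polynomial.eval_mul, Polynomial.eval_C, Polynomial.eval_pow, Polynomial.eval_X,
      pow_rho hm y (e * 2 ^ (i : ℕ)), pow_mul]
  have hdeg : P.natDegree < 2 ^ m := by
    have h2 : 2 ≤ 2 ^ m := one_lt_q hm
    apply Nat.lt_of_le_of_lt (Polynomial.natDegree_sum_le_of_forall_le _ _ ?_)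
      (show 2 ^ m - 1 < 2 ^ m by omega)
    intro i _
    exact le_trans (Polynomial.natDegree_C_mul_le _ _)
      (le_trans (Polynomial.natDegree_X_pow_le _) (rho_le hm _))
  have hsupp : ∀ n ∈ P.support, w2 n = w2 e := by
    intro n hn
    have hc : P.coeff n ≠ 0 := Polynomial.mem_support_iff.mp hn
    rw [hP, Polynomial.finset_sum_coeff] at hc
    obtain ⟨i, _, hi⟩ := Finset.exists_ne_zero_of_sum_ne_zero hc
    rw [Polynomial.coeff_C_mul, Polynomial.coeff_X_pow] at hi
    have : n = rho m (e * 2 ^ (i : ℕ)) := by by_contra h0; simp [h0] at hi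
    rw [this]
    exact w2_rho_mul_pow hm e (i : ℕ) he heq i.isLt
  rw [algDeg_eq_wdeg hm heval hdeg]
  rcases Finset.eq_empty_or_nonempty P.support with h0 | ⟨n, hn⟩
  · left; rw [wdeg, h0]; rfl
  · right
    exact le_antisymm (wdeg_le fun k hk => (hsupp k hk).le)
      ((hsupp n hn) ▸ le_wdeg hn)

end MainLemmas

section Char2Helpers

variable {m : ℕ}
local notation "K" => GaloisField 2 m

lemma K_add_self (a : K) : a + a = 0 := CharTwo.add_self_eq_zero a

lemma char2_cancel (a b c : K) : a + b + c + b + c = a := by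
  calc a + b + c + b + c = a + (b + b) + (c + c) := by ring
  _ = a := by rw [K_add_self, K_add_self, add_zero, add_zero]

end Char2Helpers

/-- If for some `c ≠ 0` the algebraic degree of `x ↦ tr(c·F(x))` is not in
`{0, 1, deg F}`, then `F` is EA-inequivalent to every power function. -/
theorem stmt_8 (m : ℕ) (hm : 0 < m) (F : GaloisField 2 m → GaloisField 2 m)
    (c : GaloisField 2 m) (hc : c ≠ 0)
    (hdeg : algDeg m (fun x => algebraMap (ZMod 2) (GaloisField 2 m)
        (Algebra.trace (ZMod 2) (GaloisField 2 m) (c * F x)))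
      ∉ ({0, 1, algDeg m F} : Set ℕ)) :
    ¬ ∃ (d : ℕ) (A₁ A₂ : GaloisField 2 m ≃ₗ[ZMod 2] GaloisField 2 m)
        (A : GaloisField 2 m →ₗ[ZMod 2] GaloisField 2 m)
        (c₁ c₂ c₀ : GaloisField 2 m),
        ∀ x, F x = A₁ ((A₂ x + c₂) ^ d) + c₁ + A x + c₀ := by
  rintro ⟨d, A₁, A₂, A, c₁, c₂, c₀, hF⟩
  set G : GaloisField 2 m → GaloisField 2 m := fun x => algebraMap (ZMod 2) (GaloisField 2 m)
    (Algebra.trace (ZMod 2) (GaloisField 2 m) (c * F x)) with hGdef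
  set t := algDeg m G with ht
  simp only [Set.mem_insert_iff, Set.mem_singleton_iff] at hdeg
  push_neg at hdeg
  obtain ⟨ht0, ht1, htF⟩ := hdeg
  -- the embedded trace components
  set τ : GaloisField 2 m → GaloisField 2 m := fun z => algebraMap (ZMod 2) (GaloisField 2 m)
    (Algebra.trace (ZMod 2) (GaloisField 2 m) (c * A₁ z)) with hτdef
  set τ₂ : GaloisField 2 m → GaloisField 2 m := fun x => algebraMap (ZMod 2) (GaloisField 2 m)
    (Algebra.trace (ZMod 2) (GaloisField 2 m) (c * A x)) with hτ₂def
  set k₀ : GaloisField 2 m := algebraMap (ZMod 2) (GaloisField 2 m)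
    (Algebra.trace (ZMod 2) (GaloisField 2 m) (c * (c₁ + c₀))) with hk₀def
  have hτadd : ∀ x y, τ (x + y) = τ x + τ y := by
    intro x y; simp only [hτdef, map_add, mul_add]
  have hτ₂add : ∀ x y, τ₂ (x + y) = τ₂ x + τ₂ y := by
    intro x y; simp only [hτ₂def, map_add, mul_add]
  have hGsplit : ∀ x, G x = τ ((A₂ x + c₂) ^ d) + τ₂ x + k₀ := by
    intro x
    have h1 : c * F x = c * A₁ ((A₂ x + c₂) ^ d) + (c * A x + c * (c₁ + c₀)) := by
      rw [hF x]; ring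
    rw [hGdef]
    simp only [h1, map_add]
    rw [hτdef, hτ₂def, hk₀def, add_assoc]
  rcases Nat.eq_zero_or_pos d with rfl | hd
  · -- degenerate case : `F` is affine
    have haff : ∀ x, G x = τ₂ x + (τ 1 + k₀) := by
      intro x
      rw [hGsplit x, pow_zero]
      ring
    have hle := algDeg_affine_le hm τ₂ hτ₂add (τ 1 + k₀)
    rw [← algDeg_congr haff, ← ht] at hle
    omega
  -- main case
  set e := rho m d with he
  have hepos : 0 < e := rho_pos d hd
  have hele : e ≤ 2 ^ m - 1 := rho_le hm d
  have hpow : ∀ y : GaloisField 2 m, y ^ d = y ^ e := fun y => (pow_rho hm y d).symm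
  set H : GaloisField 2 m → GaloisField 2 m := fun y => τ (y ^ e) with hH
  have hG : ∀ x, G x = H (A₂ x + c₂) + τ₂ x + k₀ := by
    intro x; rw [hGsplit x, hpow]
  set h := algDeg m H with hh
  -- t ≤ max h 1
  have h1 : t ≤ max h 1 := by
    rw [ht, hh]
    refine le_trans (le_of_eq (algDeg_congr ?_)) (algDeg_comp_le hm H id (⇑A₂) τ₂
      (fun _ _ => rfl) (fun x y => map_add A₂ x y) hτ₂add c₂ k₀)
    intro x; rw [hG x]; rfl
  -- h ≤ max t 1
  have h2 : h ≤ max t 1 := by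
    rw [ht, hh]
    have key : ∀ y, H y = G (A₂.symm y + A₂.symm c₂) + τ₂ (A₂.symm y)
        + (τ₂ (A₂.symm c₂) + k₀) := by
      intro y
      have hx : A₂ (A₂.symm y + A₂.symm c₂) + c₂ = y := by
        rw [map_add A₂, A₂.apply_symm_apply, A₂.apply_symm_apply, add_assoc, K_add_self,
          add_zero]
      have this0 := hG (A₂.symm y + A₂.symm c₂)
      rw [hx] at this0
      have hsplit : τ₂ (A₂.symm y + A₂.symm c₂) = τ₂ (A₂.symm y) + τ₂ (A₂.symm c₂) :=
        hτ₂add _ _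
      linear_combination -this0 - hsplit - K_add_self (τ₂ (A₂.symm y))
        - K_add_self (τ₂ (A₂.symm c₂)) - K_add_self k₀
    refine le_trans (le_of_eq (algDeg_congr ?_)) (algDeg_comp_le hm G id (⇑A₂.symm)
      (fun y => τ₂ (A₂.symm y)) (fun _ _ => rfl) (fun x y => map_add A₂.symm x y)
      (fun x y => by
        show τ₂ (A₂.symm (x + y)) = τ₂ (A₂.symm x) + τ₂ (A₂.symm y)
        rw [map_add A₂.symm, hτ₂add]) (A₂.symm c₂) (τ₂ (A₂.symm c₂) + k₀))
    intro y; rw [key y]; rfl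
  -- algDeg of H is 0 or w2 e
  have htau := algDeg_tau_pow hm τ hτadd e hepos hele
  rw [← hH, ← hh] at htau
  have ht2 : 2 ≤ t := by omega
  have hge : 2 ≤ h := by omega
  have hD : h = w2 e := by
    rcases htau with h0 | h0
    · omega
    · exact h0
  have htD : t = w2 e := by omega
  have hq := one_lt_q hm
  -- upper bound for algDeg F
  have hFup : algDeg m F ≤ max (w2 e) 1 := by
    rw [← algDeg_pow hm e (by omega)]
    refine le_trans (le_of_eq (algDeg_congr ?_)) (algDeg_comp_le hm
      (fun y : GaloisField 2 m => y ^ e)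
      (⇑A₁) (⇑A₂) (⇑A) (fun x y => map_add A₁ x y) (fun x y => map_add A₂ x y)
      (fun x y => map_add A x y) c₂ (c₁ + c₀))
    intro x
    rw [hF x, hpow]
    ring
  -- lower bound for algDeg F
  have hFdown : w2 e ≤ max (algDeg m F) 1 := by
    rw [← algDeg_pow hm e (by omega)]
    have key : ∀ y : GaloisField 2 m, y ^ e = A₁.symm (F (A₂.symm y + A₂.symm c₂))
        + A₁.symm (A (A₂.symm y)) + (A₁.symm (A (A₂.symm c₂)) + A₁.symm (c₁ + c₀)) := by
      intro y
      have hx2 : A₂ (A₂.symm y + A₂.symm c₂) + c₂ = y := by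
        rw [map_add A₂, A₂.apply_symm_apply, A₂.apply_symm_apply, add_assoc, K_add_self,
          add_zero]
      have h5 : F (A₂.symm y + A₂.symm c₂) = A₁ (y ^ e) + c₁ + A (A₂.symm y + A₂.symm c₂)
          + c₀ := by rw [hF _, hx2, hpow]
      have h6 : A₁ (y ^ e) = F (A₂.symm y + A₂.symm c₂) + A (A₂.symm y + A₂.symm c₂)
          + (c₁ + c₀) := by
        linear_combination -h5 - K_add_self c₁ - K_add_self (A (A₂.symm y + A₂.symm c₂))
          - K_add_self c₀
      have hsplitA : A (A₂.symm y + A₂.symm c₂) = A (A₂.symm y) + A (A₂.symm c₂) :=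
        map_add A _ _
      calc y ^ e = A₁.symm (A₁ (y ^ e)) := (A₁.symm_apply_apply _).symm
      _ = A₁.symm (F (A₂.symm y + A₂.symm c₂) + A (A₂.symm y + A₂.symm c₂) + (c₁ + c₀)) := by
          rw [h6]
      _ = A₁.symm (F (A₂.symm y + A₂.symm c₂)) + (A₁.symm (A (A₂.symm y))
          + A₁.symm (A (A₂.symm c₂))) + A₁.symm (c₁ + c₀) := by
          rw [map_add A₁.symm, map_add A₁.symm, hsplitA, map_add A₁.symm]
      _ = A₁.symm (F (A₂.symm y + A₂.symm c₂)) + A₁.symm (A (A₂.symm y))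
          + (A₁.symm (A (A₂.symm c₂)) + A₁.symm (c₁ + c₀)) := by ring
    have hadd3 : ∀ x y : GaloisField 2 m, A₁.symm (A (A₂.symm (x + y)))
        = A₁.symm (A (A₂.symm x)) + A₁.symm (A (A₂.symm y)) := by
      intro x y
      rw [map_add A₂.symm, map_add A, map_add A₁.symm]
    refine le_trans (le_of_eq (algDeg_congr ?_)) (algDeg_comp_le hm F (⇑A₁.symm) (⇑A₂.symm)
      (fun y => A₁.symm (A (A₂.symm y))) (fun x y => map_add A₁.symm x y)
      (fun x y => map_add A₂.symm x y) hadd3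
      (A₂.symm c₂) (A₁.symm (A (A₂.symm c₂)) + A₁.symm (c₁ + c₀)))
    intro y; rw [key y]
  have hfinal : algDeg m F = w2 e := by omega
  omega
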